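/- Let α ∈ (0,1), ε ∈ (0,1), and κ ∈ (0,1). For any v ∈ H¹₀((0,1)), ∫₀^κ (x+ε)^(−α) |v(x)|² dx ≤ C_{κ,α} ∫₀^κ (x+ε)^α |v′(x)|² dx, where C_{κ,α} = ((κ+ε)^(2−2α) − ε^(2−2α)) / ((1−α)(2−2α)). -/

import Mathlib

open MeasureTheory

open intervalIntegral in
-- Cauchy–Schwarz via the λ-trick
lemma cs_aux {a b : ℝ} (hab : a ≤ b) {f g : ℝ → ℝ}
    (hf : IntervalIntegrable (fun x => f x ^ 2) volume a b)
    (hg : IntervalIntegrable (fun x => g x ^ 2) volume a b)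
    (hfg : IntervalIntegrable (fun x => f x * g x) volume a b) :
    ∫ x in a..b, f x * g x ≤
      Real.sqrt (∫ x in a..b, f x ^ 2) * Real.sqrt (∫ x in a..b, g x ^ 2) := by
  set A := ∫ x in a..b, f x ^ 2 with hA
  set B := ∫ x in a..b, g x ^ 2 with hB
  set I := ∫ x in a..b, f x * g x with hI
  have hA0 : 0 ≤ A := intervalIntegral.integral_nonneg hab (fun x _ => sq_nonneg _)
  have hB0 : 0 ≤ B := intervalIntegral.integral_nonneg hab (fun x _ => sq_nonneg _)
  have key : ∀ l : ℝ, 0 < l → 2 * I ≤ l * A + B / l := by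
    intro l hl
    have h1 : ∀ x ∈ Set.Icc a b, 2 * (f x * g x) ≤ l * f x ^ 2 + (1/l) * g x ^ 2 := by
      intro x _
      rw [← mul_le_mul_iff_of_pos_right hl]
      have hl' : l ≠ 0 := hl.ne'
      field_simp
      nlinarith [sq_nonneg (l * f x - g x)]
    have h2 : ∫ x in a..b, 2 * (f x * g x) ≤ ∫ x in a..b, (l * f x ^ 2 + (1/l) * g x ^ 2) := by
      apply intervalIntegral.integral_mono_on hab (hfg.const_mul 2)
        ((hf.const_mul l).add (hg.const_mul (1/l))) h1
    rw [intervalIntegral.integral_const_mul] at h2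
    rw [intervalIntegral.integral_add (hf.const_mul l) (hg.const_mul (1/l)),
      intervalIntegral.integral_const_mul, intervalIntegral.integral_const_mul] at h2
    calc 2 * I ≤ l * A + (1/l) * B := h2
    _ = l * A + B / l := by ring
  rcases eq_or_lt_of_le hA0 with hA0' | hA0'
  · -- A = 0 : show I ≤ 0
    have : I ≤ 0 := by
      by_contra h
      push_neg at h
      have := key ((B + 1) / I) (by positivity)
      rw [← hA0'] at this
      have hBd : B / ((B + 1) / I) = B * I / (B+1) := by field_simp
      rw [hBd] at this
      have h2 : 2 * I ≤ B * I / (B + 1) := by simpa using this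
      have h3 : B * I / (B + 1) ≤ I := by
        rw [div_le_iff₀ (by linarith)]
        nlinarith
      linarith
    calc I ≤ 0 := this
    _ ≤ _ := by positivity
  · rcases eq_or_lt_of_le hB0 with hB0' | hB0'
    · have : I ≤ 0 := by
        by_contra h
        push_neg at h
        have := key (I / A) (by positivity)
        rw [← hB0'] at this
        have h2 : I / A * A = I := div_mul_cancel₀ _ hA0'.ne'
        rw [h2] at this
        simp at this
        linarith
      calc I ≤ 0 := this
      _ ≤ _ := by positivity
    · have := key (Real.sqrt B / Real.sqrt A) (by positivity)
      have hsA : Real.sqrt A ^ 2 = A := Real.sq_sqrt hA0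
      have hsB : Real.sqrt B ^ 2 = B := Real.sq_sqrt hB0
      have hsA0 : 0 < Real.sqrt A := Real.sqrt_pos.2 hA0'
      have hsB0 : 0 < Real.sqrt B := Real.sqrt_pos.2 hB0'
      have h1 : Real.sqrt B / Real.sqrt A * A + B / (Real.sqrt B / Real.sqrt A)
          = 2 * (Real.sqrt A * Real.sqrt B) := by
        field_simp
        nlinarith
      nlinarith

-- integral of shifted rpow
lemma rpow_shift_integral {c r a b : ℝ} (hc : 0 < c) (hab : 0 ≤ a) (hr : -1 < r) :
    ∫ x in a..b, (x + c) ^ r = ((b + c) ^ (r+1) - (a + c) ^ (r+1)) / (r+1) := by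
  have h := intervalIntegral.integral_comp_add_right (a := a) (b := b) (fun x => x ^ r) c
  rw [h, integral_rpow (Or.inl hr)]

/-- Weighted Hardy-type inequality near the degeneracy point: for `v ∈ H¹₀((0,1))`,
`∫₀^κ (x+ε)^(−α)|v|² ≤ C_{κ,α} ∫₀^κ (x+ε)^α |v′|²` with
`C_{κ,α} = ((κ+ε)^(2−2α) − ε^(2−2α))/((1−α)(2−2α))`. -/
theorem weighted_hardy_near_zero (α ε κ : ℝ) (hα : α ∈ Set.Ioo (0:ℝ) 1)
    (hε : ε ∈ Set.Ioo (0:ℝ) 1) (hκ : κ ∈ Set.Ioo (0:ℝ) 1)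
    (v v' : ℝ → ℝ)
    (hv : ∀ x ∈ Set.Icc (0:ℝ) 1, HasDerivAt v (v' x) x)
    (hv0 : v 0 = 0) (hv1 : v 1 = 0)
    (hint1 : IntervalIntegrable (fun x => (x+ε)^(-α) * (v x)^2) volume 0 κ)
    (hint2 : IntervalIntegrable (fun x => (x+ε)^α * (v' x)^2) volume 0 κ) :
    ∫ x in (0:ℝ)..κ, (x+ε)^(-α) * (v x)^2 ≤
      (((κ+ε)^(2-2*α) - ε^(2-2*α)) / ((1-α)*(2-2*α))) *
        ∫ x in (0:ℝ)..κ, (x+ε)^α * (v' x)^2 := by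
  obtain ⟨hα0, hα1⟩ := hα
  obtain ⟨hε0, hε1⟩ := hε
  obtain ⟨hκ0, hκ1⟩ := hκ
  set J := ∫ x in (0:ℝ)..κ, (x+ε)^α * (v' x)^2 with hJ
  have hJ0 : 0 ≤ J := intervalIntegral.integral_nonneg hκ0.le
    (fun x hx => mul_nonneg (Real.rpow_nonneg (by linarith [hx.1]) _) (sq_nonneg _))
  -- measurability of v'
  have hv'eq : ∀ x ∈ Set.Icc (0:ℝ) 1, deriv v x = v' x := fun x hx => (hv x hx).deriv
  have hsub : Set.uIoc (0:ℝ) κ ⊆ Set.Icc (0:ℝ) 1 := by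
    rw [Set.uIoc_of_le hκ0.le]
    exact fun x hx => ⟨hx.1.le, hx.2.trans hκ1.le⟩
  have hmeas : AEStronglyMeasurable v' (volume.restrict (Set.uIoc (0:ℝ) κ)) := by
    refine (measurable_deriv v).aestronglyMeasurable.congr ?_
    exact (ae_restrict_iff' measurableSet_uIoc).2
      (Filter.Eventually.of_forall (fun x hx => hv'eq x (hsub hx)))
  -- basic positivity
  have hpos : ∀ x : ℝ, 0 ≤ x → (0:ℝ) < x + ε := fun x hx => by linarith
  -- v'^2 integrable
  have hv'sq : IntervalIntegrable (fun x => (v' x)^2) volume 0 κ := by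
    refine IntervalIntegrable.mono_fun' (g := fun x => ε^(-α) * ((x+ε)^α * (v' x)^2))
      (hint2.const_mul _) (hmeas.mul hmeas |>.congr ?_) ?_
    · exact Filter.Eventually.of_forall (fun x => (sq (v' x)).symm)
    · refine (ae_restrict_iff' measurableSet_uIoc).2 (Filter.Eventually.of_forall ?_)
      intro x hx
      have hx0 : 0 ≤ x := ((Set.uIoc_of_le hκ0.le ▸ hx).1).le
      have h1 : ε ^ α ≤ (x+ε)^α := Real.rpow_le_rpow hε0.le (by linarith) hα0.le
      have h2 : (1:ℝ) ≤ ε^(-α) * (x+ε)^α := by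
        have he : ε^(-α) * ε^α = 1 := by
          rw [← Real.rpow_add hε0]; simp
        calc (1:ℝ) = ε^(-α) * ε^α := he.symm
        _ ≤ ε^(-α) * (x+ε)^α := by
            exact mul_le_mul_of_nonneg_left h1 (Real.rpow_nonneg hε0.le _)
      show ‖(v' x)^2‖ ≤ ε^(-α) * ((x+ε)^α * (v' x)^2)
      rw [Real.norm_of_nonneg (sq_nonneg _)]
      nlinarith [sq_nonneg (v' x)]
  -- v' integrable
  have hv'int : IntervalIntegrable v' volume 0 κ := by
    refine IntervalIntegrable.mono_fun'
      (g := fun x => (1 + (v' x)^2)/2)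
      (((_root_.intervalIntegrable_const (c := (1:ℝ))).add hv'sq).div_const 2) hmeas ?_
    refine Filter.Eventually.of_forall (fun x => ?_)
    show ‖v' x‖ ≤ (1 + (v' x)^2)/2
    rw [Real.norm_eq_abs]
    nlinarith [sq_nonneg (|v' x| - 1), abs_nonneg (v' x), sq_abs (v' x)]
  -- FTC
  have hftc : ∀ x ∈ Set.Icc (0:ℝ) κ, v x = ∫ t in (0:ℝ)..x, v' t := by
    intro x hx
    have h1 : ∀ t ∈ Set.uIcc (0:ℝ) x, HasDerivAt v (v' t) t := by
      intro t ht
      rw [Set.uIcc_of_le hx.1] at ht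
      exact hv t ⟨ht.1, ht.2.trans (hx.2.trans hκ1.le)⟩
    have h2 : IntervalIntegrable v' volume 0 x := by
      refine hv'int.mono_set ?_
      rw [Set.uIcc_of_le hx.1, Set.uIcc_of_le hκ0.le]
      exact Set.Icc_subset_Icc le_rfl hx.2
    rw [intervalIntegral.integral_eq_sub_of_hasDerivAt h1 h2, hv0, sub_zero]
  -- pointwise key bound
  have hpt : ∀ x ∈ Set.Icc (0:ℝ) κ,
      (x+ε)^(-α) * (v x)^2 ≤ ((x+ε)^(1-2*α) / (1-α)) * J := by
    intro x hx
    have hx0 : 0 ≤ x := hx.1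
    have hxε : 0 < x + ε := hpos x hx0
    set F : ℝ → ℝ := fun t => (t+ε)^(-(α/2)) with hF
    set G : ℝ → ℝ := fun t => (t+ε)^(α/2) * v' t with hG
    have hEq : ∀ t ∈ Set.uIcc (0:ℝ) x, F t * G t = v' t := by
      intro t ht
      rw [Set.uIcc_of_le hx0] at ht
      have htε : 0 < t + ε := hpos t ht.1
      simp only [hF, hG, ← mul_assoc, ← Real.rpow_add htε]
      norm_num
    have hEqF : ∀ t ∈ Set.uIcc (0:ℝ) x, F t ^ 2 = (t+ε)^(-α) := by
      intro t ht
      rw [Set.uIcc_of_le hx0] at ht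
      have htε : 0 < t + ε := hpos t ht.1
      simp only [hF, sq, ← Real.rpow_add htε]
      congr 1
      ring
    have hEqG : ∀ t ∈ Set.uIcc (0:ℝ) x, G t ^ 2 = (t+ε)^α * (v' t)^2 := by
      intro t ht
      rw [Set.uIcc_of_le hx0] at ht
      have htε : 0 < t + ε := hpos t ht.1
      have h0 : G t ^ 2 = ((t+ε)^(α/2))^(2:ℕ) * (v' t)^2 := by rw [hG, mul_pow]
      rw [h0, ← Real.rpow_natCast ((t+ε)^(α/2)) 2, ← Real.rpow_mul htε.le]
      norm_num
    have hsubx : Set.uIcc (0:ℝ) x ⊆ Set.uIcc (0:ℝ) κ := by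
      rw [Set.uIcc_of_le hx0, Set.uIcc_of_le hκ0.le]
      exact Set.Icc_subset_Icc le_rfl hx.2
    have hsubx' : Set.uIoc (0:ℝ) x ⊆ Set.uIcc (0:ℝ) x :=
      Set.uIoc_subset_uIcc
    -- integrability on [0,x]
    have hcontF2 : ContinuousOn (fun t => F t ^ 2) (Set.uIcc (0:ℝ) x) := by
      apply ContinuousOn.pow
      apply ContinuousOn.rpow_const (by fun_prop)
      intro t ht
      rw [Set.uIcc_of_le hx0] at ht
      exact Or.inl (hpos t ht.1).ne'
    have hF2 : IntervalIntegrable (fun t => F t ^ 2) volume 0 x :=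
      hcontF2.intervalIntegrable
    have hG2 : IntervalIntegrable (fun t => G t ^ 2) volume 0 x := by
      refine ((hint2.mono_set hsubx).congr ?_)
      exact fun t ht => (hEqG t (hsubx' ht)).symm
    have hFG : IntervalIntegrable (fun t => F t * G t) volume 0 x := by
      refine ((hv'int.mono_set hsubx).congr ?_)
      exact fun t ht => (hEq t (hsubx' ht)).symm
    -- the integrals
    have hIntF2 : ∫ t in (0:ℝ)..x, F t ^ 2 = ((x+ε)^(1-α) - ε^(1-α)) / (1-α) := by
      rw [intervalIntegral.integral_congr (g := fun t => (t+ε)^(-α)) hEqF,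
        rpow_shift_integral hε0 le_rfl (by linarith)]
      rw [show -α+1 = 1-α by ring]
      norm_num
    have hIntG2le : ∫ t in (0:ℝ)..x, G t ^ 2 ≤ J := by
      rw [intervalIntegral.integral_congr (g := fun t => (t+ε)^α * (v' t)^2) hEqG]
      refine intervalIntegral.integral_mono_interval le_rfl hx0 hx.2 ?_ hint2
      refine (ae_restrict_iff' measurableSet_Ioc).2 (Filter.Eventually.of_forall (fun t ht => ?_))
      show (0:ℝ) ≤ (t+ε)^α * (v' t)^2
      exact mul_nonneg (Real.rpow_nonneg (by linarith [ht.1]) _) (sq_nonneg _)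
    have hG20 : 0 ≤ ∫ t in (0:ℝ)..x, G t ^ 2 :=
      intervalIntegral.integral_nonneg hx0 (fun t _ => sq_nonneg _)
    -- Cauchy-Schwarz for v x and -(v x)
    have habs : |v x| ≤ Real.sqrt (((x+ε)^(1-α) - ε^(1-α)) / (1-α)) * Real.sqrt J := by
      have h1 := cs_aux hx0 hF2 hG2 hFG
      have hG2' : IntervalIntegrable (fun t => (-G t) ^ 2) volume 0 x := by
        simpa using hG2
      have hFG' : IntervalIntegrable (fun t => F t * (-G t)) volume 0 x := by
        simp only [mul_neg]; exact hFG.neg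
      have h2 := cs_aux hx0 hF2 hG2' hFG'
      simp only [neg_sq, mul_neg, intervalIntegral.integral_neg] at h2
      have hvx : v x = ∫ t in (0:ℝ)..x, F t * G t := by
        rw [hftc x hx]
        exact (intervalIntegral.integral_congr hEq).symm
      have hsqle : Real.sqrt (∫ t in (0:ℝ)..x, G t ^ 2) ≤ Real.sqrt J :=
        Real.sqrt_le_sqrt hIntG2le
      have hsF : (0:ℝ) ≤ Real.sqrt (∫ t in (0:ℝ)..x, F t ^ 2) := Real.sqrt_nonneg _
      rw [abs_le]
      constructor
      · rw [← hIntF2]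
        nlinarith [Real.sqrt_nonneg J, Real.sqrt_nonneg (∫ t in (0:ℝ)..x, G t ^ 2)]
      · rw [← hIntF2]
        nlinarith [Real.sqrt_nonneg J, Real.sqrt_nonneg (∫ t in (0:ℝ)..x, G t ^ 2)]
    have hv2 : (v x)^2 ≤ (((x+ε)^(1-α) - ε^(1-α)) / (1-α)) * J := by
      have hA0 : 0 ≤ ((x+ε)^(1-α) - ε^(1-α)) / (1-α) := by
        apply div_nonneg ?_ (by linarith)
        have : ε ^ (1-α) ≤ (x+ε)^(1-α) := Real.rpow_le_rpow hε0.le (by linarith) (by linarith)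
        linarith
      calc (v x)^2 = |v x|^2 := (sq_abs _).symm
      _ ≤ (Real.sqrt (((x+ε)^(1-α) - ε^(1-α)) / (1-α)) * Real.sqrt J)^2 := by
          apply pow_le_pow_left₀ (abs_nonneg _) habs
      _ = (((x+ε)^(1-α) - ε^(1-α)) / (1-α)) * J := by
          rw [mul_pow, Real.sq_sqrt hA0, Real.sq_sqrt hJ0]
    have hv2' : (v x)^2 ≤ ((x+ε)^(1-α) / (1-α)) * J := by
      refine hv2.trans ?_
      apply mul_le_mul_of_nonneg_right ?_ hJ0
      have h5 : (0:ℝ) ≤ ε^(1-α) := Real.rpow_nonneg hε0.le _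
      have h6 : (0:ℝ) < 1-α := by linarith
      gcongr
      linarith
    calc (x+ε)^(-α) * (v x)^2 ≤ (x+ε)^(-α) * (((x+ε)^(1-α) / (1-α)) * J) := by
          exact mul_le_mul_of_nonneg_left hv2' (Real.rpow_nonneg hxε.le _)
    _ = ((x+ε)^(1-2*α) / (1-α)) * J := by
          rw [show (x+ε)^(-α) * ((x+ε)^(1-α)/(1-α) * J)
              = ((x+ε)^(-α) * (x+ε)^(1-α))/(1-α) * J by ring,
            ← Real.rpow_add hxε, show -α + (1-α) = 1-2*α by ring]
  -- integrate the pointwise bound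
  have hmaj : IntervalIntegrable (fun x => ((x+ε)^(1-2*α) / (1-α)) * J) volume 0 κ := by
    apply ContinuousOn.intervalIntegrable
    apply ContinuousOn.mul ?_ continuousOn_const
    apply ContinuousOn.div_const
    apply ContinuousOn.rpow_const (by fun_prop)
    intro t ht
    rw [Set.uIcc_of_le hκ0.le] at ht
    exact Or.inl (hpos t ht.1).ne'
  have hstep : ∫ x in (0:ℝ)..κ, (x+ε)^(-α) * (v x)^2 ≤
      ∫ x in (0:ℝ)..κ, ((x+ε)^(1-2*α) / (1-α)) * J :=
    intervalIntegral.integral_mono_on hκ0.le hint1 hmaj hpt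
  refine hstep.trans ?_
  have hcomp : ∫ x in (0:ℝ)..κ, ((x+ε)^(1-2*α) / (1-α)) * J
      = (((κ+ε)^(2-2*α) - ε^(2-2*α)) / ((1-α)*(2-2*α))) * J := by
    have h1 : ∀ t ∈ Set.uIcc (0:ℝ) κ, ((t+ε)^(1-2*α) / (1-α)) * J
        = (t+ε)^(1-2*α) * (J / (1-α)) := fun t _ => by ring
    rw [intervalIntegral.integral_congr (g := fun x => (x+ε)^(1-2*α) * (J/(1-α))) h1,
      intervalIntegral.integral_mul_const, rpow_shift_integral hε0 le_rfl (by linarith),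
      show (1-2*α)+1 = 2-2*α by ring]
    rw [div_mul_div_comm, div_mul_eq_mul_div, mul_comm (2-2*α) (1-α)]
    norm_num
  rw [hcomp]
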